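/- For any R-module M, the additivization Add_R(R[M~]) of the composition of M~ with the free R-module functor is naturally isomorphic to M, where Add_R is left adjoint to the embedding M ↦ M~ of R-modules into all functors from M(R) to R-modules. -/

import Mathlib

open CategoryTheory

/-- The category `M(R)` of finitely generated free `R`-modules. -/
abbrev FFMod (R : Type) [CommRing R] :=
  ObjectProperty.FullSubcategory (fun M : ModuleCat.{0} R => Module.Finite R M ∧ Module.Free R M)

/-- The duality functor `M₁ ↦ M₁* = Hom_R(M₁, R)` on `M(R)`, with values in
`(ModuleCat R)ᵒᵖ`. -/
@[simps] def dualFF (R : Type) [CommRing R] : FFMod R ⥤ (ModuleCat R)ᵒᵖ where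
  obj M := Opposite.op (ModuleCat.of R (M.obj →ₗ[R] R))
  map {M N} f := (ModuleCat.ofHom (LinearMap.dualMap (f.hom.hom : M.obj →ₗ[R] N.obj))).op
  map_id := by intro M; rfl
  map_comp := by intro M N P f g; rfl

/-- The functor sending an `R`-module `M` to the functor
`M~ : M(R) ⥤ R-mod`, `M~(M₁) = Hom_R(M₁*, M)`. -/
noncomputable def tildeFun (R : Type) [CommRing R] :
    ModuleCat R ⥤ FFMod R ⥤ ModuleCat R :=
  linearYoneda R (ModuleCat R) ⋙
    (Functor.whiskeringLeft (FFMod R) (ModuleCat R)ᵒᵖ (ModuleCat R)).obj (dualFF R)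

noncomputable abbrev Gset (R : Type) [CommRing R] :
    ModuleCat R ⥤ (FFMod R ⥤ Type) :=
  tildeFun R ⋙ (Functor.whiskeringRight (FFMod R) (ModuleCat R) Type).obj (forget (ModuleCat R))

variable (R : Type) [CommRing R]

abbrev ofLM {M : ModuleCat R} {M₁ : FFMod R} (ξ : (M₁.obj →ₗ[R] R) →ₗ[R] M) :
    ((Gset R).obj M).obj M₁ := ModuleCat.ofHom ξ

abbrev RR1 : FFMod R :=
  ⟨ModuleCat.of R R, ⟨(inferInstance : Module.Finite R R), (inferInstance : Module.Free R R)⟩⟩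
abbrev RR2 : FFMod R :=
  ⟨ModuleCat.of R (R × R), ⟨(inferInstance : Module.Finite R (R × R)),
    (inferInstance : Module.Free R (R × R))⟩⟩

-- check computation rules
example (M : ModuleCat R) {M₁ N₁ : FFMod R} (f : M₁ ⟶ N₁)
    (ξ : (M₁.obj →ₗ[R] R) →ₗ[R] M) :
    ((Gset R).obj M).map f (ofLM R ξ) = ofLM R (ξ.comp (LinearMap.dualMap f.hom.hom)) := rfl

example {M N : ModuleCat R} (f : M ⟶ N) (M₁ : FFMod R) (ξ : (M₁.obj →ₗ[R] R) →ₗ[R] M) :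
    ((Gset R).map f).app M₁ (ofLM R ξ) = ofLM R (f.hom.comp ξ) := rfl


/-- Elements of the values of `Gset` are linear maps, by definitional equality. -/
abbrev toLM {M : ModuleCat R} {M₁ : FFMod R} (x : ((Gset R).obj M).obj M₁) :
    (M₁.obj →ₗ[R] R) →ₗ[R] M := (show ModuleCat.of R (M₁.obj →ₗ[R] R) ⟶ M from x).hom

abbrev homToRR1 {M₁ : FFMod R} (f : M₁.obj →ₗ[R] R) : M₁ ⟶ RR1 R :=
  ObjectProperty.homMk (ModuleCat.ofHom f)

/-- The embedding `M → Hom(R*, M)`, `m ↦ (u ↦ u 1 • m)`. -/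
def iotaM (M : ModuleCat R) : M →ₗ[R] ((R →ₗ[R] R) →ₗ[R] M) where
  toFun m :=
    { toFun := fun u => u 1 • m
      map_add' := fun u v => by simp [add_smul]
      map_smul' := fun r u => by
        simp only [LinearMap.smul_apply, smul_eq_mul, RingHom.id_apply, mul_smul] }
  map_add' m m' := by ext u; simp [smul_add]
  map_smul' r m := by ext u; exact smul_comm _ _ _

def xi2 (M : ModuleCat R) (m₁ m₂ : M) : ((R × R) →ₗ[R] R) →ₗ[R] M where
  toFun u := u (1, 0) • m₁ + u (0, 1) • m₂
  map_add' u v := by simp [add_smul]; abel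
  map_smul' r u := by
    simp only [LinearMap.smul_apply, smul_eq_mul, RingHom.id_apply, smul_add, mul_smul]

lemma Gset_naturality {M N : ModuleCat R} (η : (Gset R).obj M ⟶ (Gset R).obj N)
    {M₁ N₁ : FFMod R} (f : M₁ ⟶ N₁) (ξ : (M₁.obj →ₗ[R] R) →ₗ[R] M) :
    toLM R (η.app N₁ (ofLM R (ξ.comp (LinearMap.dualMap f.hom.hom))))
      = (toLM R (η.app M₁ (ofLM R ξ))).comp
          (LinearMap.dualMap f.hom.hom) := by
  have h := types_congr_hom (η.naturality f) (ofLM R ξ)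
  simp only [types_comp_apply] at h
  exact congrArg (toLM R) h

/-- The candidate map extracted from a natural transformation. -/
def phi0 {M N : ModuleCat R} (η : (Gset R).obj M ⟶ (Gset R).obj N) (m : M) : N :=
  toLM R (η.app (RR1 R) (ofLM R (M₁ := RR1 R) (iotaM R M m))) (LinearMap.id : R →ₗ[R] R)

lemma phi0_eq {M N : ModuleCat R} (η : (Gset R).obj M ⟶ (Gset R).obj N)
    (M₁ : FFMod R) (ξ : (M₁.obj →ₗ[R] R) →ₗ[R] M) (f : M₁.obj →ₗ[R] R) :
    toLM R (η.app M₁ (ofLM R ξ)) f = phi0 R η (ξ f) := by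
  have key : (ξ.comp (LinearMap.dualMap (homToRR1 R f).hom.hom) :
      (R →ₗ[R] R) →ₗ[R] M) = iotaM R M (ξ f) := by
    apply LinearMap.ext; intro u
    have hu : (u.comp f : M₁.obj →ₗ[R] R) = u 1 • f := by
      apply LinearMap.ext; intro x
      show u (f x) = u 1 • f x
      rw [smul_eq_mul, mul_comm (u 1) (f x), ← smul_eq_mul, ← map_smul, smul_eq_mul, mul_one]
    show ξ (u.comp f) = u 1 • ξ f
    rw [hu, map_smul]
  have h := congr_arg (fun (z : (R →ₗ[R] R) →ₗ[R] N) => z (LinearMap.id : R →ₗ[R] R))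
    (Gset_naturality R η (homToRR1 R f) ξ)
  rw [key] at h
  have h2 : (LinearMap.dualMap (homToRR1 R f).hom.hom) LinearMap.id = f := rfl
  simp only [LinearMap.comp_apply, h2] at h
  exact h.symm

abbrev p1 : RR2 R ⟶ RR1 R := ObjectProperty.homMk (ModuleCat.ofHom (LinearMap.fst R R R))
abbrev p2 : RR2 R ⟶ RR1 R := ObjectProperty.homMk (ModuleCat.ofHom (LinearMap.snd R R R))
abbrev psum : RR2 R ⟶ RR1 R :=
  ObjectProperty.homMk (ModuleCat.ofHom (LinearMap.fst R R R + LinearMap.snd R R R))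
abbrev fr (r : R) : RR1 R ⟶ RR1 R := ObjectProperty.homMk (ModuleCat.ofHom (r • LinearMap.id))

lemma phi0_add {M N : ModuleCat R} (η : (Gset R).obj M ⟶ (Gset R).obj N) (m₁ m₂ : M) :
    phi0 R η (m₁ + m₂) = phi0 R η m₁ + phi0 R η m₂ := by
  have c1 : (xi2 R M m₁ m₂ : ((RR2 R).obj →ₗ[R] R) →ₗ[R] M) (LinearMap.fst R R R) = m₁ := by
    show (LinearMap.fst R R R) ((1 : R), (0 : R)) • m₁
        + (LinearMap.fst R R R) ((0 : R), (1 : R)) • m₂ = m₁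
    simp
  have c2 : (xi2 R M m₁ m₂ : ((RR2 R).obj →ₗ[R] R) →ₗ[R] M) (LinearMap.snd R R R) = m₂ := by
    show (LinearMap.snd R R R) ((1 : R), (0 : R)) • m₁
        + (LinearMap.snd R R R) ((0 : R), (1 : R)) • m₂ = m₂
    simp
  have cs : (xi2 R M m₁ m₂ : ((RR2 R).obj →ₗ[R] R) →ₗ[R] M)
      (LinearMap.fst R R R + LinearMap.snd R R R) = m₁ + m₂ := by
    show (LinearMap.fst R R R + LinearMap.snd R R R) ((1 : R), (0 : R)) • m₁
        + (LinearMap.fst R R R + LinearMap.snd R R R) ((0 : R), (1 : R)) • m₂ = m₁ + m₂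
    simp
  calc phi0 R η (m₁ + m₂)
      = phi0 R η ((xi2 R M m₁ m₂ : ((RR2 R).obj →ₗ[R] R) →ₗ[R] M)
          (LinearMap.fst R R R + LinearMap.snd R R R)) := (congrArg (phi0 R η) cs).symm
    _ = toLM R (η.app (RR2 R) (ofLM R (M₁ := RR2 R) (xi2 R M m₁ m₂)))
          (LinearMap.fst R R R + LinearMap.snd R R R) :=
        (phi0_eq R η (RR2 R) (xi2 R M m₁ m₂) _).symm
    _ = toLM R (η.app (RR2 R) (ofLM R (M₁ := RR2 R) (xi2 R M m₁ m₂))) (LinearMap.fst R R R)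
          + toLM R (η.app (RR2 R) (ofLM R (M₁ := RR2 R) (xi2 R M m₁ m₂))) (LinearMap.snd R R R) :=
        map_add _ _ _
    _ = phi0 R η ((xi2 R M m₁ m₂ : ((RR2 R).obj →ₗ[R] R) →ₗ[R] M) (LinearMap.fst R R R))
          + phi0 R η ((xi2 R M m₁ m₂ : ((RR2 R).obj →ₗ[R] R) →ₗ[R] M)
            (LinearMap.snd R R R)) :=
        congrArg₂ (· + ·) (phi0_eq R η (RR2 R) (xi2 R M m₁ m₂) _)
          (phi0_eq R η (RR2 R) (xi2 R M m₁ m₂) _)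
    _ = phi0 R η m₁ + phi0 R η m₂ :=
        congrArg₂ (· + ·) (congrArg (phi0 R η) c1) (congrArg (phi0 R η) c2)

lemma phi0_smul {M N : ModuleCat R} (η : (Gset R).obj M ⟶ (Gset R).obj N) (r : R) (m : M) :
    phi0 R η (r • m) = r • phi0 R η m := by
  have c : (iotaM R M m : ((RR1 R).obj →ₗ[R] R) →ₗ[R] M)
      (r • (LinearMap.id : R →ₗ[R] R)) = r • m := by
    show (r • (LinearMap.id : R →ₗ[R] R)) 1 • m = r • m
    simp
  calc phi0 R η (r • m)
      = phi0 R η ((iotaM R M m : ((RR1 R).obj →ₗ[R] R) →ₗ[R] M)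
          (r • (LinearMap.id : R →ₗ[R] R))) := (congrArg (phi0 R η) c).symm
    _ = toLM R (η.app (RR1 R) (ofLM R (M₁ := RR1 R) (iotaM R M m))) (r • (LinearMap.id : R →ₗ[R] R)) :=
        (phi0_eq R η (RR1 R) (iotaM R M m) _).symm
    _ = r • toLM R (η.app (RR1 R) (ofLM R (M₁ := RR1 R) (iotaM R M m))) (LinearMap.id : R →ₗ[R] R) :=
        map_smul _ _ _
    _ = r • phi0 R η m := rfl

/-- The extracted linear map. -/
def phiL {M N : ModuleCat R} (η : (Gset R).obj M ⟶ (Gset R).obj N) : M →ₗ[R] N where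
  toFun := phi0 R η
  map_add' := phi0_add R η
  map_smul' := phi0_smul R η

instance : (Gset R).Full where
  map_surjective := fun {M N} η => by
    refine ⟨ModuleCat.ofHom (phiL R η), ?_⟩
    apply NatTrans.ext
    funext M₁
    apply ConcreteCategory.hom_ext; intro ξ
    apply ModuleCat.hom_ext
    show (phiL R η).comp (toLM R ξ) = toLM R (η.app M₁ ξ)
    apply LinearMap.ext; intro f
    exact (phi0_eq R η M₁ (toLM R ξ) f).symm

instance : (Gset R).Faithful where
  map_injective := fun {M N} {f g} h => by
    apply ModuleCat.hom_ext
    apply LinearMap.ext; intro m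
    have h1 := types_congr_hom (congr_fun (congr_arg NatTrans.app h) (RR1 R))
      (ofLM R (M₁ := RR1 R) (iotaM R M m))
    have h2 := congr_arg (fun z : ((Gset R).obj N).obj (RR1 R) =>
      toLM R z (LinearMap.id : R →ₗ[R] R)) h1
    show f.hom m = g.hom m
    have : ∀ (q : M ⟶ N), (q.hom.comp (iotaM R M m) : (R →ₗ[R] R) →ₗ[R] N)
        (LinearMap.id : R →ₗ[R] R) = q.hom m := by
      intro q
      show q.hom ((LinearMap.id : R →ₗ[R] R) 1 • m) = q.hom m
      simp
    rw [← this f, ← this g]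
    exact h2


/-- for any left adjoint `Add_R` of the embedding `M ↦ M~` of `R`-modules
into all functors from `M(R)` to `R`-modules, and any `R`-module `M`, one has
`Add_R (R[M~]) ≅ M`, where `R[M~]` is the pointwise free `R`-module functor on `M~`. -/
theorem additivization_of_free_of_tilde (R : Type) [CommRing R]
    (AddR : (FFMod R ⥤ ModuleCat R) ⥤ ModuleCat R) (adj : AddR ⊣ tildeFun R)
    (M : ModuleCat R) :
    Nonempty (AddR.obj ((tildeFun R).obj M ⋙ forget (ModuleCat R) ⋙ ModuleCat.free R)
      ≅ M) := by
  let adj2 := (Adjunction.whiskerRight (FFMod R) (ModuleCat.adj R)).comp adj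
  haveI : IsIso adj2.counit := adj2.counit_isIso_of_R_fully_faithful
  exact ⟨asIso (adj2.counit.app M)⟩
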